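/- Closed form of the Rényi divergence between two labeled multi-Bernoullis (discrete attribute space): for 𝕃 finite, a finite attribute space X, and LMB parameters (r_i, p_i), i = 1,2 with r_i(ℓ) ∈ [0,1), setting f_i(x,ℓ) = r_i(ℓ)p_i(x,ℓ)/(1−r_i(ℓ)), the Rényi divergence of order α ≠ 1 satisfies D_R(π₁‖π₂) = (1/(α−1))·Σ_{ℓ∈𝕃} [ ln(1 + Σ_x f₁(x,ℓ)^α f₂(x,ℓ)^{1−α}) + ln((1−r₁(ℓ))^α (1−r₂(ℓ))^{1−α}) ], where D_R(π₁‖π₂) = (1/(α−1)) ln Σ_{L⊆𝕃} Σ over attribute assignments of π₁^α π₂^{1−α}. -/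

import Mathlib

set_option maxHeartbeats 1000000


/-- Closed form of the Rényi divergence between two labeled multi-Bernoullis
(discrete attribute space). -/
theorem lmb_renyi_divergence_closed_form
    {𝕃 X : Type*} [Fintype 𝕃] [DecidableEq 𝕃] [Fintype X]
    (r₁ r₂ : 𝕃 → ℝ) (p₁ p₂ : X → 𝕃 → ℝ)
    (hr₁0 : ∀ ℓ, 0 ≤ r₁ ℓ) (hr₁1 : ∀ ℓ, r₁ ℓ < 1)
    (hr₂0 : ∀ ℓ, 0 ≤ r₂ ℓ) (hr₂1 : ∀ ℓ, r₂ ℓ < 1)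
    (hp₁0 : ∀ x ℓ, 0 ≤ p₁ x ℓ) (hp₁1 : ∀ ℓ, ∑ x : X, p₁ x ℓ = 1)
    (hp₂0 : ∀ x ℓ, 0 ≤ p₂ x ℓ) (hp₂1 : ∀ ℓ, ∑ x : X, p₂ x ℓ = 1)
    (α : ℝ) (hα0 : 0 < α) (hα1 : α ≠ 1)
    (f₁ f₂ : X → 𝕃 → ℝ)
    (hf₁ : ∀ x ℓ, f₁ x ℓ = r₁ ℓ * p₁ x ℓ / (1 - r₁ ℓ))
    (hf₂ : ∀ x ℓ, f₂ x ℓ = r₂ ℓ * p₂ x ℓ / (1 - r₂ ℓ)) :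
    (1 / (α - 1)) *
        Real.log
          (∑ L : Finset 𝕃, ∑ x : {a // a ∈ L} → X,
            ((∏ ℓ : 𝕃, (1 - r₁ ℓ)) * ∏ ℓ ∈ L.attach, f₁ (x ℓ) ℓ.1) ^ α *
              ((∏ ℓ : 𝕃, (1 - r₂ ℓ)) * ∏ ℓ ∈ L.attach, f₂ (x ℓ) ℓ.1) ^ (1 - α))
      = (1 / (α - 1)) *
          ∑ ℓ : 𝕃,
            (Real.log (1 + ∑ x : X, f₁ x ℓ ^ α * f₂ x ℓ ^ (1 - α)) +
              Real.log ((1 - r₁ ℓ) ^ α * (1 - r₂ ℓ) ^ (1 - α))) := by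
  have h1r₁ : ∀ ℓ, (0:ℝ) < 1 - r₁ ℓ := fun ℓ => by linarith [hr₁1 ℓ]
  have h1r₂ : ∀ ℓ, (0:ℝ) < 1 - r₂ ℓ := fun ℓ => by linarith [hr₂1 ℓ]
  have hf₁0 : ∀ x ℓ, 0 ≤ f₁ x ℓ := fun x ℓ => by
    rw [hf₁]
    exact div_nonneg (mul_nonneg (hr₁0 ℓ) (hp₁0 x ℓ)) (h1r₁ ℓ).le
  have hf₂0 : ∀ x ℓ, 0 ≤ f₂ x ℓ := fun x ℓ => by
    rw [hf₂]
    exact div_nonneg (mul_nonneg (hr₂0 ℓ) (hp₂0 x ℓ)) (h1r₂ ℓ).le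
  set g : X → 𝕃 → ℝ := fun x ℓ => f₁ x ℓ ^ α * f₂ x ℓ ^ (1 - α) with hg
  have hg0 : ∀ x ℓ, 0 ≤ g x ℓ := fun x ℓ =>
    mul_nonneg (Real.rpow_nonneg (hf₁0 x ℓ) _) (Real.rpow_nonneg (hf₂0 x ℓ) _)
  set c : 𝕃 → ℝ := fun ℓ => (1 - r₁ ℓ) ^ α * (1 - r₂ ℓ) ^ (1 - α) with hc
  have hc0 : ∀ ℓ, 0 < c ℓ := fun ℓ =>
    mul_pos (Real.rpow_pos_of_pos (h1r₁ ℓ) _) (Real.rpow_pos_of_pos (h1r₂ ℓ) _)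
  have hS0 : ∀ ℓ, (0:ℝ) < 1 + ∑ x : X, g x ℓ := fun ℓ => by
    have : 0 ≤ ∑ x : X, g x ℓ := Finset.sum_nonneg fun x _ => hg0 x ℓ
    linarith
  -- each term factors
  have hterm : ∀ (L : Finset 𝕃) (x : {a // a ∈ L} → X),
      ((∏ ℓ : 𝕃, (1 - r₁ ℓ)) * ∏ ℓ ∈ L.attach, f₁ (x ℓ) ℓ.1) ^ α *
        ((∏ ℓ : 𝕃, (1 - r₂ ℓ)) * ∏ ℓ ∈ L.attach, f₂ (x ℓ) ℓ.1) ^ (1 - α)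
      = (∏ ℓ : 𝕃, c ℓ) * ∏ ℓ ∈ L.attach, g (x ℓ) ℓ.1 := by
    intro L x
    rw [Real.mul_rpow (Finset.prod_nonneg fun ℓ _ => (h1r₁ ℓ).le)
        (Finset.prod_nonneg fun ℓ _ => hf₁0 _ _),
      Real.mul_rpow (Finset.prod_nonneg fun ℓ _ => (h1r₂ ℓ).le)
        (Finset.prod_nonneg fun ℓ _ => hf₂0 _ _),
      ← Real.finset_prod_rpow _ _ (fun ℓ _ => (h1r₁ ℓ).le) α,
      ← Real.finset_prod_rpow _ _ (fun ℓ _ => (h1r₂ ℓ).le) (1 - α),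
      ← Real.finset_prod_rpow _ _ (fun ℓ _ => hf₁0 _ _) α,
      ← Real.finset_prod_rpow _ _ (fun ℓ _ => hf₂0 _ _) (1 - α),
      ]
    simp only [hg, hc, Finset.prod_mul_distrib]
    ring
  -- combinatorial factorization
  have h2 : ∀ L : Finset 𝕃,
      (∑ x : {a // a ∈ L} → X, ∏ ℓ ∈ L.attach, g (x ℓ) ℓ.1)
        = ∏ ℓ ∈ L, ∑ x : X, g x ℓ := by
    intro L
    calc (∑ x : {a // a ∈ L} → X, ∏ ℓ ∈ L.attach, g (x ℓ) ℓ.1)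
        = ∑ x ∈ Fintype.piFinset (fun _ : {a // a ∈ L} => (Finset.univ : Finset X)),
            ∏ ℓ : {a // a ∈ L}, g (x ℓ) ℓ.1 := by
          rw [Fintype.piFinset_univ, Finset.univ_eq_attach]
      _ = ∏ ℓ : {a // a ∈ L}, ∑ x : X, g x ℓ.1 :=
          (Finset.prod_univ_sum (fun _ : {a // a ∈ L} => (Finset.univ : Finset X))
            (fun ℓ j => g j ℓ.1)).symm
      _ = ∏ ℓ ∈ L, ∑ x : X, g x ℓ := by
          rw [Finset.univ_eq_attach, Finset.prod_attach L (fun ℓ => ∑ x : X, g x ℓ)]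
  have h3 : (∑ L : Finset 𝕃, ∏ ℓ ∈ L, ∑ x : X, g x ℓ)
      = ∏ ℓ : 𝕃, (1 + ∑ x : X, g x ℓ) := by
    calc (∑ L : Finset 𝕃, ∏ ℓ ∈ L, ∑ x : X, g x ℓ)
        = ∑ L ∈ (Finset.univ : Finset 𝕃).powerset,
            (∏ ℓ ∈ L, ∑ x : X, g x ℓ) * ∏ ℓ ∈ Finset.univ \ L, (1:ℝ) := by
          simp [Finset.powerset_univ]
      _ = ∏ ℓ : 𝕃, ((∑ x : X, g x ℓ) + 1) := (Finset.prod_add _ _ _).symm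
      _ = ∏ ℓ : 𝕃, (1 + ∑ x : X, g x ℓ) := by simp [add_comm]
  have key : (∑ L : Finset 𝕃, ∑ x : {a // a ∈ L} → X,
        ((∏ ℓ : 𝕃, (1 - r₁ ℓ)) * ∏ ℓ ∈ L.attach, f₁ (x ℓ) ℓ.1) ^ α *
          ((∏ ℓ : 𝕃, (1 - r₂ ℓ)) * ∏ ℓ ∈ L.attach, f₂ (x ℓ) ℓ.1) ^ (1 - α))
      = ∏ ℓ : 𝕃, ((1 + ∑ x : X, g x ℓ) * c ℓ) := by
    simp only [hterm, ← Finset.mul_sum, h2, h3]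
    simp only [hc, Finset.prod_mul_distrib]
    ring
  rw [key, Real.log_prod (fun ℓ _ => (mul_pos (hS0 ℓ) (hc0 ℓ)).ne')]
  refine congrArg _ (Finset.sum_congr rfl fun ℓ _ => ?_)
  rw [Real.log_mul (hS0 ℓ).ne' (hc0 ℓ).ne']
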